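/- For d ≥ 2 and indices i ≠ j in {1,…,d}, the integral over the positive orthant ℝ₊^d of y_i·y_j·exp(−(∑_{k=1}^d y_k)²) dy equals Γ(d/2) / (4·(d+1)·(d−1)!). -/

import Mathlib

open MeasureTheory Real Set

noncomputable def Lfun (n : ℕ) (c : ℝ) : ENNReal :=
  ∫⁻ s in Set.Ioi (0:ℝ), ENNReal.ofReal (s ^ n * Real.exp (-(c + s) ^ 2))

lemma lintegral_Ioi_shift (g : ℝ → ENNReal) (t : ℝ) :
    ∫⁻ u in Set.Ioi t, g u = ∫⁻ s in Set.Ioi (0:ℝ), g (s + t) := by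
  rw [← lintegral_indicator measurableSet_Ioi, ← lintegral_indicator measurableSet_Ioi]
  rw [← lintegral_add_right_eq_self (fun u => (Set.Ioi t).indicator g u) t]
  congr 1 with s
  by_cases h : 0 < s
  · rw [Set.indicator_of_mem (by simpa using h), Set.indicator_of_mem (by simpa using h)]
  · rw [Set.indicator_of_notMem (by simpa using h), Set.indicator_of_notMem (by simpa using h)]

lemma beta_nat (n : ℕ) : ∀ (k : ℕ) (u : ℝ), 0 ≤ u →
    ∫ t in (0:ℝ)..u, t ^ k * (u - t) ^ n
      = (k.factorial * n.factorial / (k + n + 1).factorial) * u ^ (k + n + 1) := by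
  induction n with
  | zero =>
    intro k u hu
    simp only [pow_zero, mul_one, integral_pow, Nat.factorial_zero, Nat.mul_one]
    have h : ((k + 1).factorial : ℝ) = (k + 1) * k.factorial := by
      rw [Nat.factorial_succ]; push_cast; ring
    rw [Nat.add_zero]
    rw [h]
    have : (k.factorial : ℝ) ≠ 0 := Nat.cast_ne_zero.mpr k.factorial_ne_zero
    field_simp
    ring
  | succ n ih =>
    intro k u hu
    have key : ∫ t in (0:ℝ)..u, (u - t) ^ (n+1) * (((k:ℝ) + 1) * t ^ k)
        = ((n:ℝ)+1) * ∫ t in (0:ℝ)..u, t ^ (k+1) * (u - t) ^ n := by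
      have hderiv1 : ∀ x ∈ uIcc (0:ℝ) u, HasDerivAt (fun x => (u - x) ^ (n+1))
          (((n:ℝ)+1) * (u - x) ^ n * (-1)) x := by
        intro x _
        have h1 : HasDerivAt (fun x : ℝ => u - x) (-1) x := by
          simpa using (hasDerivAt_id x).const_sub u
        have := h1.pow (n+1)
        simpa [Pi.pow_def, mul_comm, Nat.add_sub_cancel] using this
      have hderiv2 : ∀ x ∈ uIcc (0:ℝ) u, HasDerivAt (fun x : ℝ => x ^ (k+1))
          (((k:ℝ)+1) * x ^ k) x := by
        intro x _
        simpa [Nat.add_sub_cancel] using hasDerivAt_pow (k+1) x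
      have := intervalIntegral.integral_mul_deriv_eq_deriv_mul hderiv1 hderiv2
        (by apply Continuous.intervalIntegrable; continuity)
        (by apply Continuous.intervalIntegrable; continuity)
      rw [this]
      simp only [sub_self, zero_pow, Nat.succ_ne_zero, ne_eq, not_false_iff, zero_mul, mul_zero,
        sub_zero, zero_sub]
      rw [← intervalIntegral.integral_neg, ← intervalIntegral.integral_const_mul]
      congr 1 with t
      ring
    have lhs_eq : ∫ t in (0:ℝ)..u, t ^ k * (u - t) ^ (n+1)
        = (((n:ℝ)+1) / ((k:ℝ)+1)) * ∫ t in (0:ℝ)..u, t ^ (k+1) * (u - t) ^ n := by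
      have hk : ((k:ℝ) + 1) ≠ 0 := by positivity
      have h5 : ((k:ℝ)+1) * ∫ t in (0:ℝ)..u, t ^ k * (u - t) ^ (n+1)
          = ((n:ℝ)+1) * ∫ t in (0:ℝ)..u, t ^ (k+1) * (u - t) ^ n := by
        rw [← key, ← intervalIntegral.integral_const_mul]
        congr 1 with t
        ring
      field_simp
      linarith [h5]
    rw [lhs_eq, ih (k+1) u hu]
    have e1 : ((k+1) + n + 1) = (k + (n+1) + 1) := by omega
    rw [e1]
    have h2 : ((k + (n+1) + 1).factorial : ℝ) ≠ 0 := Nat.cast_ne_zero.mpr (Nat.factorial_ne_zero _)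
    have h3 : ((k+1).factorial : ℝ) = (k+1) * k.factorial := by
      rw [Nat.factorial_succ]; push_cast; ring
    have h4 : ((n+1).factorial : ℝ) = (n+1) * n.factorial := by
      rw [Nat.factorial_succ]; push_cast; ring
    rw [h3, h4]
    have hk : ((k:ℝ) + 1) ≠ 0 := by positivity
    field_simp

lemma integrableOn_pow_exp (n : ℕ) (c : ℝ) (hc : 0 ≤ c) :
    IntegrableOn (fun s : ℝ => s ^ n * Real.exp (-(c + s) ^ 2)) (Set.Ioi 0) := by
  have base : IntegrableOn (fun s : ℝ => s ^ n * Real.exp (-s ^ 2)) (Set.Ioi 0) := by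
    have := integrableOn_rpow_mul_exp_neg_rpow (p := 2) (s := (n : ℝ))
      (lt_of_lt_of_le (by norm_num) (Nat.cast_nonneg n)) two_pos
    refine this.congr_fun (fun x hx => ?_) measurableSet_Ioi
    rw [Set.mem_Ioi] at hx
    dsimp only
    rw [Real.rpow_natCast, show (2:ℝ) = ((2:ℕ):ℝ) by norm_num, Real.rpow_natCast]
  refine base.integrable.mono' ?_ ?_
  · exact (((continuous_pow n).mul (by continuity)).aestronglyMeasurable).restrict
  · filter_upwards [ae_restrict_mem measurableSet_Ioi] with s hs
    rw [Set.mem_Ioi] at hs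
    rw [Real.norm_eq_abs, abs_of_nonneg (by positivity)]
    have h1 : s ^ 2 ≤ (c + s) ^ 2 := by nlinarith
    have := Real.exp_le_exp.mpr (neg_le_neg h1)
    nlinarith [pow_nonneg hs.le n, Real.exp_pos (-(c+s)^2), Real.exp_pos (-s^2)]

lemma Lfun_eq_ofReal (n : ℕ) (c : ℝ) (hc : 0 ≤ c) :
    Lfun n c = ENNReal.ofReal (∫ s in Set.Ioi (0:ℝ), s ^ n * Real.exp (-(c + s) ^ 2)) := by
  rw [ofReal_integral_eq_lintegral_ofReal (integrableOn_pow_exp n c hc)]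
  · rfl
  · filter_upwards [ae_restrict_mem measurableSet_Ioi] with s hs
    rw [Set.mem_Ioi] at hs
    positivity

lemma Lfun_zero_eval (n : ℕ) :
    Lfun n 0 = ENNReal.ofReal ((1/2) * Real.Gamma (((n:ℝ) + 1) / 2)) := by
  rw [Lfun_eq_ofReal n 0 le_rfl]
  congr 1
  have := integral_rpow_mul_exp_neg_rpow (p := 2) (q := (n : ℝ)) (by norm_num)
    (lt_of_lt_of_le (by norm_num) (Nat.cast_nonneg n))
  rw [show (1:ℝ)/2 * Real.Gamma (((n:ℝ)+1)/2) = 1/2 * Real.Gamma (((n:ℝ)+1)/2) from rfl]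
  rw [← this]
  refine setIntegral_congr_fun measurableSet_Ioi (fun x hx => ?_)
  rw [Set.mem_Ioi] at hx
  rw [Real.rpow_natCast, show (2:ℝ) = ((2:ℕ):ℝ) by norm_num, Real.rpow_natCast]
  norm_num

lemma step_lemma (k n : ℕ) (c : ℝ) :
    ∫⁻ t in Set.Ioi (0:ℝ), ENNReal.ofReal (t ^ k) * Lfun n (c + t)
      = ENNReal.ofReal ((k.factorial * n.factorial : ℝ) / (k + n + 1).factorial) *
        Lfun (k + n + 1) c := by
  set K : ℝ := (k.factorial * n.factorial : ℝ) / (k + n + 1).factorial with hK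
  have hK0 : 0 ≤ K := by positivity
  set Φ : ℝ × ℝ → ENNReal := fun p =>
    {q : ℝ × ℝ | q.1 < q.2}.indicator
      (fun q => ENNReal.ofReal (q.1 ^ k * (q.2 - q.1) ^ n * Real.exp (-(c + q.2) ^ 2))) p
    with hΦ
  have hΦmeas : Measurable Φ := by
    refine Measurable.indicator ?_ (measurableSet_lt measurable_fst measurable_snd)
    exact ENNReal.measurable_ofReal.comp (by fun_prop)
  have stepA : ∀ t ∈ Set.Ioi (0:ℝ),
      ENNReal.ofReal (t ^ k) * Lfun n (c + t) = ∫⁻ u in Set.Ioi (0:ℝ), Φ (t, u) := by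
    intro t ht
    rw [Set.mem_Ioi] at ht
    rw [Lfun, ← lintegral_const_mul' _ _ ENNReal.ofReal_ne_top]
    have e1 : ∫⁻ s in Set.Ioi (0:ℝ),
        ENNReal.ofReal (t ^ k) * ENNReal.ofReal (s ^ n * Real.exp (-(c + t + s) ^ 2))
        = ∫⁻ s in Set.Ioi (0:ℝ),
          (fun u => ENNReal.ofReal (t ^ k * (u - t) ^ n * Real.exp (-(c + u) ^ 2))) (s + t) := by
      refine setLIntegral_congr_fun measurableSet_Ioi (fun s hs => ?_)
      rw [← ENNReal.ofReal_mul (by positivity)]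
      congr 1
      ring_nf
    rw [e1, ← lintegral_Ioi_shift
      (fun u => ENNReal.ofReal (t ^ k * (u - t) ^ n * Real.exp (-(c + u) ^ 2))) t]
    rw [← lintegral_indicator measurableSet_Ioi, ← lintegral_indicator measurableSet_Ioi]
    congr 1 with u
    by_cases h : t < u
    · rw [Set.indicator_of_mem (by simpa using h),
        Set.indicator_of_mem (by simpa using ht.trans h)]
      rw [hΦ]
      simp only []
      rw [Set.indicator_of_mem (by simpa using h)]
    · rw [Set.indicator_of_notMem (by simpa using h)]
      by_cases h0 : 0 < u
      · rw [Set.indicator_of_mem (by simpa using h0), hΦ]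
        simp only []
        rw [Set.indicator_of_notMem (by simpa using h)]
      · rw [Set.indicator_of_notMem (by simpa using h0)]
  rw [setLIntegral_congr_fun measurableSet_Ioi (stepA)]
  have swap := lintegral_lintegral_swap (μ := volume.restrict (Set.Ioi (0:ℝ)))
    (ν := volume.restrict (Set.Ioi (0:ℝ))) (f := fun t u => Φ (t, u))
    (hΦmeas.aemeasurable)
  rw [swap]
  have stepD : ∀ u ∈ Set.Ioi (0:ℝ),
      ∫⁻ t in Set.Ioi (0:ℝ), Φ (t, u)
        = ENNReal.ofReal K * ENNReal.ofReal (u ^ (k + n + 1) * Real.exp (-(c + u) ^ 2)) := by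
    intro u hu
    rw [Set.mem_Ioi] at hu
    have e2 : ∀ t : ℝ, Φ (t, u)
        = (Set.Iio u).indicator
            (fun t => ENNReal.ofReal (t ^ k * (u - t) ^ n * Real.exp (-(c + u) ^ 2))) t := by
      intro t
      by_cases h : t < u
      · rw [Set.indicator_of_mem (by simpa using h), hΦ]
        simp only []
        rw [Set.indicator_of_mem (by simpa using h)]
      · rw [Set.indicator_of_notMem (by simpa using h), hΦ]
        simp only []
        rw [Set.indicator_of_notMem (by simpa using h)]
    simp_rw [e2]
    rw [lintegral_indicator measurableSet_Iio, Measure.restrict_restrict measurableSet_Iio,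
      Set.Iio_inter_Ioi]
    have e3 : ∫⁻ t in Set.Ioo (0:ℝ) u,
        ENNReal.ofReal (t ^ k * (u - t) ^ n * Real.exp (-(c + u) ^ 2))
        = ENNReal.ofReal (Real.exp (-(c + u) ^ 2)) *
          ∫⁻ t in Set.Ioo (0:ℝ) u, ENNReal.ofReal (t ^ k * (u - t) ^ n) := by
      rw [← lintegral_const_mul' _ _ ENNReal.ofReal_ne_top]
      refine setLIntegral_congr_fun measurableSet_Ioo (fun t ht => ?_)
      rw [← ENNReal.ofReal_mul (Real.exp_nonneg _)]
      congr 1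
      ring
    rw [e3]
    have hint : IntegrableOn (fun t : ℝ => t ^ k * (u - t) ^ n) (Set.Ioo 0 u) := by
      apply (Continuous.integrableOn_Icc (by continuity)).mono_set Set.Ioo_subset_Icc_self
    have e4 : ∫⁻ t in Set.Ioo (0:ℝ) u, ENNReal.ofReal (t ^ k * (u - t) ^ n)
        = ENNReal.ofReal (∫ t in Set.Ioo (0:ℝ) u, t ^ k * (u - t) ^ n) := by
      rw [ofReal_integral_eq_lintegral_ofReal hint]
      filter_upwards [ae_restrict_mem measurableSet_Ioo] with t ht
      exact mul_nonneg (pow_nonneg ht.1.le _) (pow_nonneg (sub_nonneg.mpr ht.2.le) _)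
    rw [e4]
    have e5 : ∫ t in Set.Ioo (0:ℝ) u, t ^ k * (u - t) ^ n = K * u ^ (k + n + 1) := by
      rw [← integral_Ioc_eq_integral_Ioo, ← intervalIntegral.integral_of_le hu.le]
      exact beta_nat n k u hu.le
    rw [e5, ENNReal.ofReal_mul hK0, mul_comm (ENNReal.ofReal (Real.exp _)), mul_assoc,
      ← ENNReal.ofReal_mul (pow_nonneg hu.le _)]
  rw [setLIntegral_congr_fun measurableSet_Ioi (stepD)]
  rw [lintegral_const_mul' _ _ ENNReal.ofReal_ne_top]
  rfl

def orth (m : ℕ) : Set (Fin m → ℝ) := {y | ∀ i, 0 ≤ y i}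

lemma orth_eq (m : ℕ) : orth m = Set.pi Set.univ (fun _ : Fin m => Set.Ici (0:ℝ)) := by
  ext y; simp [orth]; rfl

lemma measurableSet_orth (m : ℕ) : MeasurableSet (orth m) := by
  rw [orth_eq]
  exact MeasurableSet.univ_pi (fun _ => measurableSet_Ici)

lemma peel {m : ℕ} (i : Fin (m + 1)) (f : (Fin (m + 1) → ℝ) → ENNReal) (hf : Measurable f) :
    ∫⁻ y in orth (m + 1), f y
      = ∫⁻ t in Set.Ioi (0:ℝ), ∫⁻ z in orth m, f (i.insertNth t z) := by
  set e := MeasurableEquiv.piFinSuccAbove (fun _ : Fin (m + 1) => ℝ) i with he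
  have hmp : MeasurePreserving e.symm :=
    (MeasureTheory.volume_preserving_piFinSuccAbove (fun _ : Fin (m + 1) => ℝ) i).symm e
  have hpre : e.symm ⁻¹' orth (m + 1) = Set.Ici (0:ℝ) ×ˢ orth m := by
    ext ⟨t, z⟩
    simp only [he, Set.mem_preimage, Set.mem_prod, Set.mem_Ici, orth, Set.mem_setOf_eq,
      MeasurableEquiv.piFinSuccAbove_symm_apply, Fin.insertNthEquiv, Equiv.coe_fn_mk,
      i.forall_iff_succAbove, Fin.insertNth_apply_same, Fin.insertNth_apply_succAbove]
  have := hmp.setLIntegral_comp_preimage_emb e.symm.measurableEmbedding f (orth (m + 1))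
  rw [← this, hpre]
  have hfe : (fun p : ℝ × (Fin m → ℝ) => f (i.insertNth p.1 p.2)) = fun p => f (e.symm p) := by
    funext p
    simp [he, MeasurableEquiv.piFinSuccAbove_symm_apply, Fin.insertNthEquiv]
  have hmeas2 : Measurable (fun p : ℝ × (Fin m → ℝ) => f (i.insertNth p.1 p.2)) := by
    rw [hfe]; exact hf.comp e.symm.measurable
  calc ∫⁻ p in Set.Ici (0:ℝ) ×ˢ orth m, f (e.symm p) ∂volume
      = ∫⁻ p in Set.Ici (0:ℝ) ×ˢ orth m, f (i.insertNth p.1 p.2)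
          ∂((volume : Measure ℝ).prod (volume : Measure (Fin m → ℝ))) := by
        rw [← MeasureTheory.Measure.volume_eq_prod, hfe]
    _ = ∫⁻ t in Set.Ici (0:ℝ), ∫⁻ z in orth m, f (i.insertNth t z) := by
        rw [← Measure.prod_restrict]
        rw [MeasureTheory.lintegral_prod _ hmeas2.aemeasurable]
    _ = ∫⁻ t in Set.Ioi (0:ℝ), ∫⁻ z in orth m, f (i.insertNth t z) := by
        rw [Measure.restrict_congr_set Ioi_ae_eq_Ici.symm]

noncomputable def Gfun (m : ℕ) (c : ℝ) : ENNReal :=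
  ∫⁻ w in orth m, ENNReal.ofReal (Real.exp (-(c + ∑ k, w k) ^ 2))

lemma Gfun_zero (c : ℝ) : Gfun 0 c = ENNReal.ofReal (Real.exp (-c ^ 2)) := by
  have h1 : orth 0 = Set.univ := by ext y; simp [orth]
  rw [Gfun, h1]
  simp only [Finset.univ_eq_empty, Finset.sum_empty, add_zero]
  rw [Measure.restrict_univ, lintegral_const]
  rw [show (volume : Measure (Fin 0 → ℝ)) Set.univ = 1 by
    rw [MeasureTheory.volume_pi, Measure.pi_empty_univ], mul_one]

lemma sum_insertNth {m : ℕ} (i : Fin (m + 1)) (t : ℝ) (z : Fin m → ℝ) :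
    ∑ j, i.insertNth t z j = t + ∑ j, z j := by
  rw [Fin.sum_univ_succAbove _ i]
  simp [Fin.insertNth_apply_same, Fin.insertNth_apply_succAbove]

lemma Gfun_succ (m : ℕ) (c : ℝ) :
    Gfun (m + 1) c = ∫⁻ t in Set.Ioi (0:ℝ), Gfun m (c + t) := by
  rw [Gfun, peel (0 : Fin (m+1)) (fun y => ENNReal.ofReal (Real.exp (-(c + ∑ k, y k) ^ 2)))
    (by fun_prop)]
  refine setLIntegral_congr_fun measurableSet_Ioi (fun t ht => ?_)
  rw [Gfun]
  refine lintegral_congr fun z => ?_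
  rw [sum_insertNth, ← add_assoc]

lemma Gfun_eq (m : ℕ) : ∀ c : ℝ, Gfun (m + 1) c
    = ENNReal.ofReal (1 / (m.factorial : ℝ)) * Lfun m c := by
  induction m with
  | zero =>
    intro c
    rw [Gfun_succ, Lfun]
    simp only [Nat.factorial_zero, Nat.cast_one, ne_eq, one_ne_zero, not_false_iff, div_self,
      ENNReal.ofReal_one, one_mul]
    refine setLIntegral_congr_fun measurableSet_Ioi (fun t ht => ?_)
    rw [Gfun_zero, pow_zero, one_mul]
  | succ m ih =>
    intro c
    rw [Gfun_succ]
    have e1 : ∫⁻ t in Set.Ioi (0:ℝ), Gfun (m + 1) (c + t)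
        = ENNReal.ofReal (1 / (m.factorial : ℝ)) *
          ∫⁻ t in Set.Ioi (0:ℝ), ENNReal.ofReal (t ^ 0) * Lfun m (c + t) := by
      rw [← lintegral_const_mul' _ _ ENNReal.ofReal_ne_top]
      refine setLIntegral_congr_fun measurableSet_Ioi
        (fun t ht => ?_)
      rw [ih, pow_zero, ENNReal.ofReal_one, one_mul]
    rw [e1, step_lemma 0 m c]
    rw [← mul_assoc, ← ENNReal.ofReal_mul (by positivity)]
    have : (0 + m + 1) = m + 1 := by omega
    rw [this]
    congr 2
    rw [Nat.factorial_zero, Nat.factorial_succ]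
    have h1 : (m.factorial : ℝ) ≠ 0 := Nat.cast_ne_zero.mpr m.factorial_ne_zero
    push_cast
    field_simp

lemma innerW (m : ℕ) (c : ℝ) :
    ∫⁻ u in Set.Ioi (0:ℝ), ENNReal.ofReal u * Gfun m (c + u)
      = ENNReal.ofReal (1 / (((m + 1).factorial : ℕ) : ℝ)) * Lfun (m + 1) c := by
  cases m with
  | zero =>
    have e1 : ∀ u ∈ Set.Ioi (0:ℝ), ENNReal.ofReal u * Gfun 0 (c + u)
        = ENNReal.ofReal (u ^ 1 * Real.exp (-(c + u) ^ 2)) := by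
      intro u hu
      rw [Set.mem_Ioi] at hu
      rw [Gfun_zero, ← ENNReal.ofReal_mul hu.le, pow_one]
    rw [setLIntegral_congr_fun measurableSet_Ioi (e1)]
    have h2 : ENNReal.ofReal (1 / ((((0:ℕ) + 1).factorial : ℕ) : ℝ)) = 1 := by
      norm_num [Nat.factorial]
    rw [h2, one_mul, Lfun]
  | succ m' =>
    have e1 : ∀ u ∈ Set.Ioi (0:ℝ), ENNReal.ofReal u * Gfun (m' + 1) (c + u)
        = ENNReal.ofReal (1 / (m'.factorial : ℝ)) *
          (ENNReal.ofReal (u ^ 1) * Lfun m' (c + u)) := by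
      intro u hu
      rw [Gfun_eq, pow_one]
      ring
    rw [setLIntegral_congr_fun measurableSet_Ioi (e1)]
    rw [lintegral_const_mul' _ _ ENNReal.ofReal_ne_top, step_lemma 1 m' c]
    rw [← mul_assoc, ← ENNReal.ofReal_mul (by positivity)]
    have hidx : (1 + m' + 1) = m' + 2 := by omega
    rw [hidx]
    congr 2
    rw [Nat.factorial_one, Nat.factorial_succ (m' + 1), Nat.factorial_succ m']
    have h1 : (m'.factorial : ℝ) ≠ 0 := Nat.cast_ne_zero.mpr m'.factorial_ne_zero
    push_cast
    field_simp

theorem orthant_integral_mixed (d : ℕ) (hd : 2 ≤ d) (i j : Fin d) (hij : i ≠ j) :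
    ∫ y in {y : Fin d → ℝ | ∀ i, 0 ≤ y i},
        y i * y j * Real.exp (-(∑ k, y k) ^ 2) =
      Real.Gamma ((d : ℝ) / 2) / (4 * (d + 1) * (Nat.factorial (d - 1))) := by
  obtain ⟨m, rfl⟩ : ∃ m, d = m + 2 := ⟨d - 2, by omega⟩
  obtain ⟨j', hj'⟩ := Fin.exists_succAbove_eq (Ne.symm hij)
  have hset : {y : Fin (m+2) → ℝ | ∀ i, 0 ≤ y i} = orth (m+2) := rfl
  rw [hset]
  have hcont : Continuous (fun y : Fin (m+2) → ℝ => y i * y j * Real.exp (-(∑ k, y k) ^ 2)) := by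
    fun_prop
  have hnn : 0 ≤ᵐ[volume.restrict (orth (m+2))]
      (fun y : Fin (m+2) → ℝ => y i * y j * Real.exp (-(∑ k, y k) ^ 2)) := by
    filter_upwards [ae_restrict_mem (measurableSet_orth (m+2))] with y hy
    exact mul_nonneg (mul_nonneg (hy i) (hy j)) (Real.exp_nonneg _)
  rw [MeasureTheory.integral_eq_lintegral_of_nonneg_ae hnn hcont.aestronglyMeasurable.restrict]
  have key : ∫⁻ y in orth (m+2), ENNReal.ofReal (y i * y j * Real.exp (-(∑ k, y k) ^ 2))
      = ENNReal.ofReal (1 / (((m+3).factorial : ℕ) : ℝ)) * Lfun (m+3) 0 := by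
    rw [peel i (fun y => ENNReal.ofReal (y i * y j * Real.exp (-(∑ k, y k) ^ 2)))
      (Measurable.ennreal_ofReal (by fun_prop))]
    have in1 : ∀ t ∈ Set.Ioi (0:ℝ),
        (∫⁻ z in orth (m+1), ENNReal.ofReal
          ((i.insertNth t z : Fin (m+2) → ℝ) i * (i.insertNth t z : Fin (m+2) → ℝ) j *
            Real.exp (-(∑ k, (i.insertNth t z : Fin (m+2) → ℝ) k) ^ 2)))
        = ENNReal.ofReal t *
            (ENNReal.ofReal (1 / (((m+1).factorial : ℕ) : ℝ)) * Lfun (m+1) t) := by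
      intro t ht
      rw [Set.mem_Ioi] at ht
      have e1 : ∀ z : Fin (m+1) → ℝ,
          ENNReal.ofReal ((i.insertNth t z : Fin (m+2) → ℝ) i *
              (i.insertNth t z : Fin (m+2) → ℝ) j *
            Real.exp (-(∑ k, (i.insertNth t z : Fin (m+2) → ℝ) k) ^ 2))
          = ENNReal.ofReal (t * z j' * Real.exp (-(t + ∑ k, z k) ^ 2)) := by
        intro z
        rw [Fin.insertNth_apply_same, ← hj', Fin.insertNth_apply_succAbove, sum_insertNth]
      rw [lintegral_congr e1]
      rw [peel j' (fun z => ENNReal.ofReal (t * z j' * Real.exp (-(t + ∑ k, z k) ^ 2)))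
        (Measurable.ennreal_ofReal (by fun_prop))]
      have e2 : ∀ u ∈ Set.Ioi (0:ℝ),
          (∫⁻ w in orth m, ENNReal.ofReal
            (t * (j'.insertNth u w : Fin (m+1) → ℝ) j' *
              Real.exp (-(t + ∑ k, (j'.insertNth u w : Fin (m+1) → ℝ) k) ^ 2)))
          = ENNReal.ofReal t * (ENNReal.ofReal u * Gfun m (t + u)) := by
        intro u hu
        rw [Set.mem_Ioi] at hu
        have e3 : ∀ w : Fin m → ℝ,
            ENNReal.ofReal (t * (j'.insertNth u w : Fin (m+1) → ℝ) j' *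
              Real.exp (-(t + ∑ k, (j'.insertNth u w : Fin (m+1) → ℝ) k) ^ 2))
            = ENNReal.ofReal (t * u) *
                ENNReal.ofReal (Real.exp (-((t + u) + ∑ k, w k) ^ 2)) := by
          intro w
          rw [Fin.insertNth_apply_same, sum_insertNth, ← ENNReal.ofReal_mul (by positivity),
            ← add_assoc]
        rw [lintegral_congr e3, lintegral_const_mul' _ _ ENNReal.ofReal_ne_top]
        rw [ENNReal.ofReal_mul ht.le, mul_assoc]
        rfl
      rw [setLIntegral_congr_fun measurableSet_Ioi (e2)]
      rw [lintegral_const_mul' _ _ ENNReal.ofReal_ne_top, innerW m t]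
    rw [setLIntegral_congr_fun measurableSet_Ioi (in1)]
    have e4 : ∀ t ∈ Set.Ioi (0:ℝ),
        ENNReal.ofReal t * (ENNReal.ofReal (1 / (((m+1).factorial : ℕ) : ℝ)) * Lfun (m+1) t)
        = ENNReal.ofReal (1 / (((m+1).factorial : ℕ) : ℝ)) *
            (ENNReal.ofReal (t ^ 1) * Lfun (m+1) (0 + t)) := by
      intro t ht
      rw [pow_one, zero_add]
      ring
    rw [setLIntegral_congr_fun measurableSet_Ioi (e4)]
    rw [lintegral_const_mul' _ _ ENNReal.ofReal_ne_top, step_lemma 1 (m+1) 0]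
    rw [← mul_assoc, ← ENNReal.ofReal_mul (by positivity)]
    have hidx : (1 + (m+1) + 1) = m + 3 := by omega
    rw [hidx]
    congr 2
    have h1 : (((m+1).factorial : ℕ) : ℝ) ≠ 0 := Nat.cast_ne_zero.mpr (Nat.factorial_ne_zero _)
    have h3 : (((m+3).factorial : ℕ) : ℝ) ≠ 0 := Nat.cast_ne_zero.mpr (Nat.factorial_ne_zero _)
    rw [Nat.factorial_one]
    push_cast
    field_simp
  rw [key, Lfun_zero_eval (m+3)]
  rw [← ENNReal.ofReal_mul (by positivity)]
  have hΓpos : 0 < Real.Gamma ((((m:ℝ)+3) + 1) / 2) := Real.Gamma_pos_of_pos (by positivity)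
  rw [ENNReal.toReal_ofReal (by positivity)]
  have hred : (m + 2 - 1) = m + 1 := rfl
  rw [hred]
  have hΓ : Real.Gamma ((((m+3:ℕ):ℝ) + 1) / 2)
      = (((m:ℝ)+2)/2) * Real.Gamma (((m:ℝ)+2)/2) := by
    rw [show (((m+3:ℕ):ℝ) + 1) / 2 = ((m:ℝ)+2)/2 + 1 by push_cast; ring]
    rw [Real.Gamma_add_one (by positivity)]
  rw [hΓ]
  have h1 : (((m+1).factorial : ℕ) : ℝ) ≠ 0 := Nat.cast_ne_zero.mpr (Nat.factorial_ne_zero _)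
  rw [show ((m+3).factorial : ℕ) = (m+3) * ((m+2) * (m+1).factorial) by
    rw [Nat.factorial_succ (m+2), Nat.factorial_succ (m+1)]]
  push_cast
  field_simp
  ring
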